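/- Let 0 < d < s and let X, Y be independent random variables each uniformly distributed on [0,s]. Let r₁, r₂ ∈ [0,1] with r₁ + r₂ ≥ 1 and suppose d ≤ s·r₁ and d ≤ s·r₂. Then the diversified positions ν₁ = (1−r₁)X + r₁Y and ν₂ = r₂X + (1−r₂)Y satisfy P(ν₁ ≤ d and ν₂ ≤ d) = (1/2)·(d/s)²·(1/r₁ + 1/r₂). -/

import Mathlib

open MeasureTheory ProbabilityTheory Set

/-- The uniform probability distribution on the interval `[0, s]`. -/
noncomputable def uniformOnIcc (s : ℝ) : Measure ℝ :=
  (ENNReal.ofReal s)⁻¹ • (volume.restrict (Icc (0 : ℝ) s))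

private lemma ofReal_max_zero (a : ℝ) : ENNReal.ofReal (max a 0) = ENNReal.ofReal a := by
  rcases le_total a 0 with h | h
  · rw [max_eq_right h, ENNReal.ofReal_of_nonpos h, ENNReal.ofReal_zero]
  · rw [max_eq_left h]

set_option maxHeartbeats 1600000 in
/-- for `r₁ + r₂ ≥ 1` with `d ≤ s·r₁` and `d ≤ s·r₂`, the probability
of joint default is `(1/2)·(d/s)²·(1/r₁ + 1/r₂)`. -/
theorem prob_joint_default_sum_ge_one
    {Ω : Type*} [MeasurableSpace Ω] (P : Measure Ω) [IsProbabilityMeasure P]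
    (s d : ℝ) (hd : 0 < d) (hds : d < s)
    (X Y : Ω → ℝ) (hXm : Measurable X) (hYm : Measurable Y)
    (hX : P.map X = uniformOnIcc s) (hY : P.map Y = uniformOnIcc s)
    (hXY : IndepFun X Y P)
    (r₁ r₂ : ℝ) (hr₁ : r₁ ∈ Icc (0 : ℝ) 1) (hr₂ : r₂ ∈ Icc (0 : ℝ) 1)
    (hsum : 1 ≤ r₁ + r₂) (h1 : d ≤ s * r₁) (h2 : d ≤ s * r₂) :
    P {ω | (1 - r₁) * X ω + r₁ * Y ω ≤ d ∧ r₂ * X ω + (1 - r₂) * Y ω ≤ d}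
      = ENNReal.ofReal ((1 / 2) * (d / s) ^ 2 * (1 / r₁ + 1 / r₂)) := by
  have hs : (0:ℝ) < s := hd.trans hds
  have hr₁0 : 0 < r₁ := by nlinarith [hr₁.1, hr₁.2]
  have hr₂0 : 0 < r₂ := by nlinarith [hr₂.1, hr₂.2]
  have hr₁1 : r₁ ≤ 1 := hr₁.2
  have hr₂1 : r₂ ≤ 1 := hr₂.2
  -- the endpoint of the second triangle
  set e : ℝ := d / r₂ with he
  have hde : d ≤ e := by
    rw [he, le_div_iff₀ hr₂0]; nlinarith
  have hes : e ≤ s := by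
    rw [he, div_le_iff₀ hr₂0]; linarith [h2]
  -- the section-length function
  set g : ℝ → ℝ := fun x =>
    if x ≤ d then (d - (1 - r₁) * x) / r₁ else max ((d - r₂ * x) / (1 - r₂)) 0 with hg
  have hgnonneg : ∀ x, 0 ≤ g x := by
    intro x
    simp only [hg]
    by_cases hxd : x ≤ d
    · rw [if_pos hxd]
      apply div_nonneg _ hr₁0.le
      nlinarith [mul_le_mul_of_nonneg_left hxd (by linarith : (0:ℝ) ≤ 1 - r₁)]
    · rw [if_neg hxd]; exact le_max_right _ _
  -- section volumes
  have hsect : ∀ x ∈ Icc (0:ℝ) s,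
      volume ({y : ℝ | (1 - r₁) * x + r₁ * y ≤ d ∧ r₂ * x + (1 - r₂) * y ≤ d} ∩ Icc 0 s)
        = ENNReal.ofReal (g x) := by
    intro x hx
    obtain ⟨hx0, hxs⟩ := hx
    by_cases hxd : x ≤ d
    · have hset : {y : ℝ | (1 - r₁) * x + r₁ * y ≤ d ∧ r₂ * x + (1 - r₂) * y ≤ d} ∩ Icc 0 s
          = Icc 0 ((d - (1 - r₁) * x) / r₁) := by
        ext y
        simp only [mem_inter_iff, mem_setOf_eq, mem_Icc]
        constructor
        · rintro ⟨⟨hc1, _⟩, hy0, _⟩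
          exact ⟨hy0, by rw [le_div_iff₀ hr₁0]; linarith⟩
        · rintro ⟨hy0, hyb⟩
          have hb : r₁ * y ≤ d - (1 - r₁) * x := by
            have := (le_div_iff₀ hr₁0).1 hyb; linarith
          refine ⟨⟨by linarith, ?_⟩, hy0, ?_⟩
          · -- second constraint from the first
            nlinarith [mul_le_mul_of_nonneg_left hb (by linarith : (0:ℝ) ≤ 1 - r₂),
              mul_nonneg (by linarith : (0:ℝ) ≤ r₁ + r₂ - 1) (by linarith : (0:ℝ) ≤ d - x)]
          · -- y ≤ s
            have hbs : (d - (1 - r₁) * x) / r₁ ≤ s := by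
              rw [div_le_iff₀ hr₁0]
              nlinarith [mul_nonneg (by linarith : (0:ℝ) ≤ 1 - r₁) hx0]
            linarith [hyb]
      rw [hset, Real.volume_Icc]; simp only [hg]
      simp [hxd]
    · push_neg at hxd
      by_cases hr : r₂ = 1
      · have hset : {y : ℝ | (1 - r₁) * x + r₁ * y ≤ d ∧ r₂ * x + (1 - r₂) * y ≤ d} ∩ Icc 0 s
            = (∅ : Set ℝ) := by
          ext y
          simp only [mem_inter_iff, mem_setOf_eq, mem_Icc, mem_empty_iff_false, iff_false,
            not_and, and_imp]
          intro _ hc2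
          subst hr
          intro _ _
          nlinarith
        rw [hset]
        subst hr
        simp only [hg]
        simp only [if_neg (not_le.2 hxd), sub_self, div_zero, max_self]
        simp
      · have hr2lt : r₂ < 1 := lt_of_le_of_ne hr₂1 hr
        have h1r2 : (0:ℝ) < 1 - r₂ := by linarith
        have hset : {y : ℝ | (1 - r₁) * x + r₁ * y ≤ d ∧ r₂ * x + (1 - r₂) * y ≤ d} ∩ Icc 0 s
            = Icc 0 ((d - r₂ * x) / (1 - r₂)) := by
          ext y
          simp only [mem_inter_iff, mem_setOf_eq, mem_Icc]
          constructor
          · rintro ⟨⟨_, hc2⟩, hy0, _⟩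
            exact ⟨hy0, by rw [le_div_iff₀ h1r2]; linarith⟩
          · rintro ⟨hy0, hyb⟩
            have hb : (1 - r₂) * y ≤ d - r₂ * x := by
              have := (le_div_iff₀ h1r2).1 hyb; linarith
            have hbd : (d - r₂ * x) / (1 - r₂) ≤ d := by
              rw [div_le_iff₀ h1r2]; nlinarith
            refine ⟨⟨?_, by linarith⟩, hy0, by linarith⟩
            nlinarith [mul_le_mul_of_nonneg_left hb hr₁0.le,
              mul_nonneg (by linarith : (0:ℝ) ≤ r₁ + r₂ - 1) (by linarith : (0:ℝ) ≤ x - d)]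
        rw [hset, Real.volume_Icc]; simp only [hg]; rw [if_neg (not_le.2 hxd), sub_zero, ofReal_max_zero]
  -- measurability of g
  have hgm : Measurable g := by
    simp only [hg]
    exact Measurable.ite (measurableSet_le measurable_id measurable_const)
      (((measurable_const.sub (measurable_const.mul measurable_id)).div_const r₁))
      (((measurable_const.sub (measurable_const.mul measurable_id)).div_const (1 - r₂)).max
        measurable_const)
  -- integrability of g on (0, s]
  have hInt : IntegrableOn g (Ioc 0 s) volume := by
    apply Measure.integrableOn_of_bounded (M := s) measure_Ioc_lt_top.ne
      (hgm.aestronglyMeasurable)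
    refine (ae_restrict_iff' measurableSet_Ioc).2 (ae_of_all _ fun x hx => ?_)
    obtain ⟨hx0, hxs⟩ := hx
    rw [Real.norm_eq_abs, abs_of_nonneg (hgnonneg x)]
    simp only [hg]
    by_cases hxd : x ≤ d
    · rw [if_pos hxd, div_le_iff₀ hr₁0]
      nlinarith [mul_nonneg (by linarith : (0:ℝ) ≤ 1 - r₁) hx0.le]
    · rw [if_neg hxd]
      push_neg at hxd
      refine max_le ?_ hs.le
      by_cases hr : r₂ = 1
      · subst hr; simp [hs.le]
      · have h1r2 : (0:ℝ) < 1 - r₂ := lt_of_le_of_ne (by linarith) (by intro h; exact hr (by linarith))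
        rw [div_le_iff₀ h1r2]; nlinarith
  have hII : ∀ a b : ℝ, 0 ≤ a → b ≤ s → a ≤ b → IntervalIntegrable g volume a b := by
    intro a b ha hb hab
    rw [intervalIntegrable_iff_integrableOn_Ioc_of_le hab]
    exact hInt.mono_set (Ioc_subset_Ioc ha hb)
  -- integral on [0, d]
  have hI1 : ∫ x in (0:ℝ)..d, g x = d ^ 2 * (1 + r₁) / (2 * r₁) := by
    rw [intervalIntegral.integral_congr (g := fun x => d / r₁ - (1 - r₁) / r₁ * x)
      (fun x hx => by
        rw [uIcc_of_le hd.le] at hx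
        simp only [hg]
        simp only [if_pos hx.2]
        field_simp
        try ring)]
    rw [intervalIntegral.integral_sub (g := fun x => (1 - r₁) / r₁ * x) intervalIntegrable_const
        ((continuous_const.mul continuous_id').intervalIntegrable _ _ :
          IntervalIntegrable (fun x => (1 - r₁) / r₁ * x) volume 0 d),
      intervalIntegral.integral_const, intervalIntegral.integral_const_mul, integral_id]
    rw [smul_eq_mul]
    field_simp
    ring
  -- integral on [d, e]
  have hI2 : ∫ x in d..e, g x = d ^ 2 * (1 - r₂) / (2 * r₂) := by
    by_cases hr : r₂ = 1
    · subst hr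
      have : e = d := by rw [he]; simp
      rw [this, intervalIntegral.integral_same]
      norm_num
    · have hr2lt : r₂ < 1 := lt_of_le_of_ne hr₂1 hr
      have h1r2 : (0:ℝ) < 1 - r₂ := by linarith
      rw [intervalIntegral.integral_congr (g := fun x => d / (1 - r₂) - r₂ / (1 - r₂) * x)
        (fun x hx => by
          rw [uIcc_of_le hde] at hx
          obtain ⟨hxd, hxe⟩ := hx
          simp only [hg]
          by_cases hxd' : x ≤ d
          · have hxeq : x = d := le_antisymm hxd' hxd
            subst hxeq
            rw [if_pos le_rfl]
            field_simp
            try ring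
          · rw [if_neg hxd']
            have hnum : 0 ≤ d - r₂ * x := by
              rw [he, le_div_iff₀ hr₂0] at hxe; linarith
            rw [max_eq_left (div_nonneg hnum h1r2.le)]
            field_simp
            try ring)]
      rw [intervalIntegral.integral_sub (g := fun x => r₂ / (1 - r₂) * x) intervalIntegrable_const
          ((continuous_const.mul continuous_id').intervalIntegrable _ _ :
            IntervalIntegrable (fun x => r₂ / (1 - r₂) * x) volume d e),
        intervalIntegral.integral_const, intervalIntegral.integral_const_mul, integral_id]
      rw [he, smul_eq_mul]
      field_simp
      ring
  -- integral on [e, s]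
  have hI3 : ∫ x in e..s, g x = 0 := by
    rw [intervalIntegral.integral_congr_ae (g := fun _ => (0:ℝ)) ?_, intervalIntegral.integral_const,
      smul_zero]
    refine ae_of_all _ fun x hx => ?_
    rw [uIoc_of_le hes] at hx
    obtain ⟨hxe, hxs⟩ := hx
    have hxd : ¬ x ≤ d := not_le.2 (lt_of_le_of_lt hde hxe)
    simp only [hg]
    simp only [if_neg hxd]
    by_cases hr : r₂ = 1
    · subst hr; simp
    · have h1r2 : (0:ℝ) < 1 - r₂ := lt_of_le_of_ne (by linarith) (by intro h; exact hr (by linarith))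
      have : (d - r₂ * x) / (1 - r₂) ≤ 0 := by
        apply div_nonpos_of_nonpos_of_nonneg _ h1r2.le
        rw [he, div_lt_iff₀ hr₂0] at hxe
        linarith
      exact max_eq_right this
  -- total integral
  have hItot : ∫ x in Ioc (0:ℝ) s, g x = d ^ 2 / 2 * (1 / r₁ + 1 / r₂) := by
    rw [← intervalIntegral.integral_of_le hs.le,
      ← intervalIntegral.integral_add_adjacent_intervals (a := 0) (b := e) (c := s)
        ((hII 0 d le_rfl (by linarith) hd.le).trans (hII d e hd.le hes hde)) (hII e s (hd.le.trans hde) le_rfl hes),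
      ← intervalIntegral.integral_add_adjacent_intervals (a := 0) (b := d) (c := e)
        (hII 0 d le_rfl (by linarith) hd.le) (hII d e hd.le hes hde),
      hI1, hI2, hI3]
    field_simp
    ring
  -- the uniform measure is a probability measure
  have hofs0 : ENNReal.ofReal s ≠ 0 := by simp [hs]
  haveI hUP : IsProbabilityMeasure (uniformOnIcc s) := by
    constructor
    rw [uniformOnIcc, Measure.smul_apply, Measure.restrict_apply MeasurableSet.univ,
      univ_inter, Real.volume_Icc, sub_zero, smul_eq_mul]
    exact ENNReal.inv_mul_cancel hofs0 ENNReal.ofReal_ne_top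
  -- the target region
  set T : Set (ℝ × ℝ) :=
    {p : ℝ × ℝ | (1 - r₁) * p.1 + r₁ * p.2 ≤ d ∧ r₂ * p.1 + (1 - r₂) * p.2 ≤ d} with hTdef
  have hm12 : Measurable fun p : ℝ × ℝ => (1 - r₁) * p.1 + r₁ * p.2 :=
    (measurable_const.mul measurable_fst).add (measurable_const.mul measurable_snd)
  have hm21 : Measurable fun p : ℝ × ℝ => r₂ * p.1 + (1 - r₂) * p.2 :=
    (measurable_const.mul measurable_fst).add (measurable_const.mul measurable_snd)
  have hT : MeasurableSet T :=
    (measurableSet_le hm12 measurable_const).inter (measurableSet_le hm21 measurable_const)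
  -- reduce to the product measure
  have hmap : P.map (fun ω => (X ω, Y ω)) = (uniformOnIcc s).prod (uniformOnIcc s) := by
    have := (indepFun_iff_map_prod_eq_prod_map_map hXm.aemeasurable hYm.aemeasurable).1 hXY
    rw [hX, hY] at this
    exact this
  have hPT : P {ω | (1 - r₁) * X ω + r₁ * Y ω ≤ d ∧ r₂ * X ω + (1 - r₂) * Y ω ≤ d}
      = ((uniformOnIcc s).prod (uniformOnIcc s)) T := by
    rw [← hmap, Measure.map_apply (hXm.prodMk hYm) hT]
    rfl
  rw [hPT, Measure.prod_apply hT]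
  -- compute sections w.r.t. the uniform measure
  have hsecT : ∀ x : ℝ, uniformOnIcc s (Prod.mk x ⁻¹' T)
      = (ENNReal.ofReal s)⁻¹ *
        volume ({y : ℝ | (1 - r₁) * x + r₁ * y ≤ d ∧ r₂ * x + (1 - r₂) * y ≤ d} ∩ Icc 0 s) := by
    intro x
    rw [uniformOnIcc, Measure.smul_apply,
      Measure.restrict_apply (measurable_prodMk_left hT), smul_eq_mul]
    rfl
  simp_rw [hsecT]
  rw [uniformOnIcc, lintegral_smul_measure,
    lintegral_const_mul' _ _ (ENNReal.inv_ne_top.2 hofs0)]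
  have hlint : ∫⁻ x in Icc (0:ℝ) s,
      volume ({y : ℝ | (1 - r₁) * x + r₁ * y ≤ d ∧ r₂ * x + (1 - r₂) * y ≤ d} ∩ Icc 0 s)
      = ENNReal.ofReal (d ^ 2 / 2 * (1 / r₁ + 1 / r₂)) := by
    rw [setLIntegral_congr_fun_ae measurableSet_Icc (ae_of_all _ fun x hx => by rw [hsect x hx]),
      ← setLIntegral_congr (Ioc_ae_eq_Icc (α := ℝ) (a := 0) (b := s)),
      ← ofReal_integral_eq_lintegral_ofReal hInt (ae_of_all _ hgnonneg), hItot]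
  rw [hlint, ← ENNReal.ofReal_inv_of_pos hs, ← ENNReal.ofReal_mul (by positivity),
    smul_eq_mul, ← ENNReal.ofReal_mul (by positivity)]
  congr 1
  field_simp
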